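/- Let R be a ring with 1 and A an n×n matrix over R with symmetric characteristic polynomial p(x) = s-det(xI − A). Write n·(xI − A)(xI − A)* = p(x)·I + C_0 + C_1 x + ⋯ + C_n x^n with uniquely determined matrices C_0,…,C_n over R (so C_k is the coefficient matrix of x^k in n·(xI − A)(xI − A)* − p(x)·I). Then every entry of every C_k, 0 ≤ k ≤ n, lies in the additive subgroup [R,R] of R generated by all commutators [r,s] = rs − sr. -/

import Mathlib

open Polynomial in
/-- The preadjoint `A*` of an `n × n` matrix `A` over a (possibly noncommutative) ring `R`:
its `(r, s)` entry is the sum, over all permutations `τ, ρ` of `Fin n` with `τ s = s` and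
`ρ s = r`, of `sgn ρ` times the ordered product
`a_{τ(1),ρ(τ(1))} ⋯ a_{τ(s-1),ρ(τ(s-1))} · a_{τ(s+1),ρ(τ(s+1))} ⋯ a_{τ(n),ρ(τ(n))}`
(the factor at position `s` is omitted). -/
def Matrix.preadjoint {n : ℕ} {R : Type*} [Ring R] (A : Matrix (Fin n) (Fin n) R) :
    Matrix (Fin n) (Fin n) R :=
  fun r s =>
    ∑ τ : Equiv.Perm (Fin n), ∑ ρ : Equiv.Perm (Fin n),
      if τ s = s ∧ ρ s = r then
        ((Equiv.Perm.sign ρ : ℤ)) •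
          (((List.finRange n).filter (fun k => k ≠ s)).map
            (fun k => A (τ k) (ρ (τ k)))).prod
      else 0

open Polynomial in
/-- The characteristic matrix `x·I - A` of `A`, as a matrix over `R[x]`. -/
noncomputable def Matrix.charMat {n : ℕ} {R : Type*} [Ring R] (A : Matrix (Fin n) (Fin n) R) :
    Matrix (Fin n) (Fin n) R[X] :=
  (X : R[X]) • (1 : Matrix (Fin n) (Fin n) R[X]) - A.map C

/-- The symmetric determinant `s-det A = tr(A* · A) = tr(A · A*)`. -/
def Matrix.sdet {n : ℕ} {R : Type*} [Ring R] (A : Matrix (Fin n) (Fin n) R) : R :=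
  Matrix.trace (A.preadjoint * A)

open Polynomial in
/-- The symmetric characteristic polynomial `p(x) = s-det(x·I - A) ∈ R[x]`. -/
noncomputable def Matrix.sCharPoly {n : ℕ} {R : Type*} [Ring R] (A : Matrix (Fin n) (Fin n) R) : R[X] :=
  A.charMat.sdet


namespace CommProof

variable {S : Type*} [Ring S]

def K (S : Type*) [Ring S] : AddSubgroup S :=
  AddSubgroup.closure {z : S | ∃ r s : S, z = r * s - s * r}

lemma comm_mem (a b : S) : a * b - b * a ∈ K S :=
  AddSubgroup.subset_closure ⟨a, b, rfl⟩

lemma sum_sub_mem {ι : Type*} (s : Finset ι) (f g : ι → S)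
    (h : ∀ x ∈ s, f x - g x ∈ K S) : s.sum f - s.sum g ∈ K S := by
  rw [← Finset.sum_sub_distrib]; exact AddSubgroup.sum_mem _ h

section Perm

open Equiv Finset

variable {n : ℕ}

lemma map_add_finRange [NeZero n] (c : Fin n) :
    (List.finRange n).map (fun k => k + c) =
      (List.finRange n).drop c.1 ++ (List.finRange n).take c.1 := by
  apply List.ext_getElem
  · simp
  · intro i h1 h2
    have hc : Fin.val c < n := c.2
    have hi : i < n := by simpa using h1
    rw [List.getElem_map, List.getElem_finRange]
    rcases lt_or_ge i (n - c.1) with h | h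
    · rw [List.getElem_append_left (by simpa using h)]
      rw [List.getElem_drop, List.getElem_finRange]
      apply Fin.ext
      simp only [Fin.add_def, Fin.coe_cast]
      rw [Nat.mod_eq_of_lt (by omega)]; omega
    · rw [List.getElem_append_right (by simpa using h)]
      rw [List.getElem_take, List.getElem_finRange]
      apply Fin.ext
      simp only [Fin.add_def, Fin.coe_cast, List.length_drop, List.length_finRange]
      rw [Nat.mod_eq_sub_mod (by omega), Nat.mod_eq_of_lt (by omega)]; omega

/-- ordered product of `f` along the ordering given by `σ`. -/
def P (f : Fin n → S) (σ : Equiv.Perm (Fin n)) : S :=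
  ((List.finRange n).map (fun k => f (σ k))).prod

lemma rot_mem [NeZero n] (f : Fin n → S) (σ : Equiv.Perm (Fin n)) (c : Fin n) :
    P f (σ * (Equiv.addRight c : Equiv.Perm (Fin n))) - P f σ ∈ K S := by
  have h1 : P f (σ * (Equiv.addRight c : Equiv.Perm (Fin n)))
      = ((List.finRange n).map (fun k => f (σ (k + c)))).prod := by
    simp [P, Equiv.Perm.mul_apply]
  have h2 : ((List.finRange n).map (fun k => f (σ (k + c))))
      = ((List.finRange n).map (fun k => k + c)).map (fun k => f (σ k)) := by
    rw [List.map_map]; rfl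
  have h3 : P f σ = (((List.finRange n).take c.1).map (fun k => f (σ k))).prod *
      (((List.finRange n).drop c.1).map (fun k => f (σ k))).prod := by
    conv_lhs => rw [P, ← List.take_append_drop c.1 (List.finRange n)]
    rw [List.map_append, List.prod_append]
  rw [h1, h2, map_add_finRange, List.map_append, List.prod_append, h3]
  exact comm_mem _ _

lemma step3 [NeZero n] (f : Fin n → S) (j : Fin n) :
    (∑ σ : Equiv.Perm (Fin n), P f σ)
      - n • ∑ σ ∈ Finset.univ.filter (fun σ : Equiv.Perm (Fin n) => σ 0 = j), P f σ
      ∈ K S := by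
  classical
  rw [← Finset.sum_fiberwise Finset.univ (fun σ : Equiv.Perm (Fin n) => σ⁻¹ j) (P f)]
  have hn : n • ∑ σ ∈ Finset.univ.filter (fun σ : Equiv.Perm (Fin n) => σ 0 = j), P f σ
      = ∑ _p : Fin n, ∑ σ ∈ Finset.univ.filter (fun σ : Equiv.Perm (Fin n) => σ 0 = j),
          P f σ := by
    rw [Finset.sum_const, Finset.card_univ, Fintype.card_fin]
  rw [hn]
  apply sum_sub_mem
  intro p _
  have he : ∑ σ ∈ Finset.univ.filter (fun σ : Equiv.Perm (Fin n) => σ⁻¹ j = p), P f σ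
      = ∑ σ ∈ Finset.univ.filter (fun σ : Equiv.Perm (Fin n) => σ 0 = j),
          P f (σ * (Equiv.addRight (-p) : Equiv.Perm (Fin n))) := by
    apply Finset.sum_bij'
      (i := fun σ _ => σ * (Equiv.addRight p : Equiv.Perm (Fin n)))
      (j := fun σ _ => σ * (Equiv.addRight (-p) : Equiv.Perm (Fin n)))
    · intro a ha
      simp only [Finset.mem_filter, Finset.mem_univ, true_and] at ha ⊢
      rw [Equiv.Perm.inv_eq_iff_eq] at ha
      simp [Equiv.Perm.mul_apply, ← ha]
    · intro a ha
      simp only [Finset.mem_filter, Finset.mem_univ, true_and] at ha ⊢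
      rw [Equiv.Perm.inv_eq_iff_eq]
      simp [Equiv.Perm.mul_apply, ha]
    · intro a _; ext x; simp [Equiv.Perm.mul_apply]
    · intro a _; ext x; simp [Equiv.Perm.mul_apply]
    · intro a _
      congr 1
      ext x; simp [Equiv.Perm.mul_apply]
  rw [he]
  apply sum_sub_mem
  intro σ _
  exact rot_mem f σ (-p)

def baseList (n : ℕ) (j : Fin n) : List (Fin n) :=
  j :: (List.finRange n).filter (fun k => k ≠ j)

lemma baseList_nodup (n : ℕ) (j : Fin n) : (baseList n j).Nodup := by
  refine List.Nodup.cons ?_ ((List.nodup_finRange n).filter _)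
  intro h
  have := List.of_mem_filter h
  simp at this

lemma baseList_mem (n : ℕ) (j : Fin n) (x : Fin n) : x ∈ baseList n j := by
  by_cases hx : x = j
  · simp [baseList, hx]
  · simp [baseList, List.mem_filter, hx]

lemma baseList_length (n : ℕ) (j : Fin n) : (baseList n j).length = n := by
  have h1 : (baseList n j).toFinset = Finset.univ := by
    ext x; simp [baseList_mem]
  have h2 := List.toFinset_card_of_nodup (baseList_nodup n j)
  rw [h1] at h2
  simpa using h2.symm

/-- the permutation sending the standard order to `baseList n j`. -/
noncomputable def β (j : Fin n) : Equiv.Perm (Fin n) :=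
  Equiv.ofBijective (fun k => (baseList n j).get (Fin.cast (baseList_length n j).symm k))
    (by
      have hinj : Function.Injective
          (fun k : Fin n => (baseList n j).get (Fin.cast (baseList_length n j).symm k)) := by
        intro a b hab
        have := (List.Nodup.get_inj_iff (baseList_nodup n j)).mp hab
        simpa [Fin.ext_iff] using this
      exact (Finite.injective_iff_bijective).mp hinj)

lemma β_apply (j : Fin n) (k : Fin n) :
    β j k = (baseList n j).get (Fin.cast (baseList_length n j).symm k) := rfl

lemma β_zero [NeZero n] (j : Fin n) : β j 0 = j := by
  rw [β_apply]; rfl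

lemma map_β (j : Fin n) :
    (List.finRange n).map (β j) = baseList n j := by
  apply List.ext_get
  · simp [baseList_length]
  · intro i h1 h2
    simp [β_apply]

lemma step2 [NeZero n] (j : Fin n) (f : Fin n → S) :
    (∑ τ ∈ Finset.univ.filter (fun τ : Equiv.Perm (Fin n) => τ j = j),
        ((baseList n j).map (fun k => f (τ k))).prod)
      = ∑ σ ∈ Finset.univ.filter (fun σ : Equiv.Perm (Fin n) => σ 0 = j), P f σ := by
  classical
  apply Finset.sum_bij' (i := fun τ _ => τ * β j) (j := fun σ _ => σ * (β j)⁻¹)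
  · intro a ha
    simp only [Finset.mem_filter, Finset.mem_univ, true_and] at ha ⊢
    rw [Equiv.Perm.mul_apply, β_zero, ha]
  · intro a ha
    simp only [Finset.mem_filter, Finset.mem_univ, true_and] at ha ⊢
    rw [Equiv.Perm.mul_apply, show (β j)⁻¹ j = 0 by
      rw [Equiv.Perm.inv_eq_iff_eq, β_zero], ha]
  · intro a _; exact mul_inv_cancel_right a (β j)
  · intro a _; exact inv_mul_cancel_right a (β j)
  · intro a _
    rw [P, ← map_β j, List.map_map]
    rfl

end Perm

end CommProof

namespace CommProof
section Main

variable {S : Type*} [Ring S] {n : ℕ}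

open Equiv Finset

lemma entry_eq (M : Matrix (Fin n) (Fin n) S) (i j : Fin n) :
    (M * M.preadjoint) i j
      = ∑ ρ : Equiv.Perm (Fin n), (Equiv.Perm.sign ρ : ℤ) •
          ∑ τ ∈ Finset.univ.filter (fun τ : Equiv.Perm (Fin n) => τ j = j),
            (M i (ρ j) *
              (((List.finRange n).filter (fun k => k ≠ j)).map
                (fun k => M (τ k) (ρ (τ k)))).prod) := by
  rw [Matrix.mul_apply]
  simp only [Matrix.preadjoint, Finset.mul_sum, mul_ite, mul_zero, ite_and, mul_smul_comm]
  rw [Finset.sum_comm]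
  calc (∑ τ : Equiv.Perm (Fin n), ∑ u : Fin n, ∑ ρ : Equiv.Perm (Fin n),
        if τ j = j then
          if ρ j = u then
            (Equiv.Perm.sign ρ : ℤ) •
              (M i u *
                (((List.finRange n).filter (fun k => k ≠ j)).map
                  (fun k => M (τ k) (ρ (τ k)))).prod)
          else 0
        else 0)
      = ∑ τ : Equiv.Perm (Fin n), ∑ ρ : Equiv.Perm (Fin n),
          (if τ j = j then
            (Equiv.Perm.sign ρ : ℤ) •
              (M i (ρ j) *
                (((List.finRange n).filter (fun k => k ≠ j)).map
                  (fun k => M (τ k) (ρ (τ k)))).prod)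
          else 0) := by
        refine Finset.sum_congr rfl fun τ _ => ?_
        rw [Finset.sum_comm]
        refine Finset.sum_congr rfl fun ρ _ => ?_
        by_cases h : τ j = j
        · simp only [h, if_true]
          rw [Finset.sum_ite_eq]
          simp
        · simp [h]
    _ = _ := by
        rw [Finset.sum_comm]
        refine Finset.sum_congr rfl fun ρ _ => ?_
        rw [Finset.smul_sum, Finset.sum_filter]

lemma sdet_eq (M : Matrix (Fin n) (Fin n) S) :
    M.sdet = ∑ u : Fin n, ∑ ρ : Equiv.Perm (Fin n), (Equiv.Perm.sign ρ : ℤ) •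
        ∑ τ ∈ Finset.univ.filter (fun τ : Equiv.Perm (Fin n) => τ u = u),
          ((((List.finRange n).filter (fun k => k ≠ u)).map
              (fun k => M (τ k) (ρ (τ k)))).prod * M u (ρ u)) := by
  rw [Matrix.sdet, Matrix.trace]
  simp only [Matrix.diag, Matrix.mul_apply, Matrix.preadjoint, Finset.sum_mul, ite_mul,
    zero_mul, ite_and, smul_mul_assoc]
  rw [Finset.sum_comm]
  refine Finset.sum_congr rfl fun u _ => ?_
  rw [Finset.sum_comm]
  calc (∑ τ : Equiv.Perm (Fin n), ∑ x : Fin n, ∑ ρ : Equiv.Perm (Fin n),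
        if τ u = u then
          if ρ u = x then
            (Equiv.Perm.sign ρ : ℤ) •
              ((((List.finRange n).filter (fun k => k ≠ u)).map
                  (fun k => M (τ k) (ρ (τ k)))).prod * M u x)
          else 0
        else 0)
      = ∑ τ : Equiv.Perm (Fin n), ∑ ρ : Equiv.Perm (Fin n),
          (if τ u = u then
            (Equiv.Perm.sign ρ : ℤ) •
              ((((List.finRange n).filter (fun k => k ≠ u)).map
                  (fun k => M (τ k) (ρ (τ k)))).prod * M u (ρ u))
          else 0) := by
        refine Finset.sum_congr rfl fun τ _ => ?_
        rw [Finset.sum_comm]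
        refine Finset.sum_congr rfl fun ρ _ => ?_
        by_cases h : τ u = u
        · simp only [h, if_true]
          rw [Finset.sum_ite_eq]
          simp
        · simp [h]
    _ = _ := by
        rw [Finset.sum_comm]
        refine Finset.sum_congr rfl fun ρ _ => ?_
        rw [Finset.smul_sum, Finset.sum_filter]

end Main
end CommProof

namespace CommProof
section Main2

variable {S : Type*} [Ring S] {n : ℕ}

open Equiv Finset

lemma main (M : Matrix (Fin n) (Fin n) S) (i j : Fin n) :
    n • ((M * M.preadjoint) i j) - (if i = j then M.sdet else 0) ∈ K S := by
  classical
  haveI : NeZero n := ⟨by rintro rfl; exact Nat.not_lt_zero _ j.2⟩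
  set f : Equiv.Perm (Fin n) → Fin n → S :=
    fun ρ t => if t = j then M i (ρ j) else M t (ρ t) with hf
  have hA : (M * M.preadjoint) i j
      = ∑ ρ : Equiv.Perm (Fin n), (Equiv.Perm.sign ρ : ℤ) •
          ∑ σ ∈ Finset.univ.filter (fun σ : Equiv.Perm (Fin n) => σ 0 = j), P (f ρ) σ := by
    rw [entry_eq]
    refine Finset.sum_congr rfl fun ρ _ => ?_
    rw [← step2 j (f ρ)]
    congr 1
    refine Finset.sum_congr rfl fun τ hτ => ?_
    simp only [Finset.mem_filter, Finset.mem_univ, true_and] at hτ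
    rw [baseList, List.map_cons, List.prod_cons, hτ]
    congr 1
    · simp [hf]
    · refine congrArg _ (List.map_congr_left fun k hk => ?_).symm
      have hkj : k ≠ j := by
        have := List.of_mem_filter hk; simpa using this
      have hτk : τ k ≠ j := fun h => hkj (τ.injective (h.trans hτ.symm))
      simp [hf, hτk]
  set B := ∑ ρ : Equiv.Perm (Fin n), (Equiv.Perm.sign ρ : ℤ) •
      ∑ σ : Equiv.Perm (Fin n), P (f ρ) σ with hB
  have hKB : n • ((M * M.preadjoint) i j) - B ∈ K S := by
    rw [hA, Finset.smul_sum, hB]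
    apply sum_sub_mem
    intro ρ _
    have hcomm : n • ((Equiv.Perm.sign ρ : ℤ) •
        ∑ σ ∈ Finset.univ.filter (fun σ : Equiv.Perm (Fin n) => σ 0 = j), P (f ρ) σ)
        = (Equiv.Perm.sign ρ : ℤ) •
          (n • ∑ σ ∈ Finset.univ.filter (fun σ : Equiv.Perm (Fin n) => σ 0 = j), P (f ρ) σ) := by
      rw [smul_comm]
    rw [hcomm, ← smul_sub]
    apply AddSubgroup.zsmul_mem
    have h3 := (K S).neg_mem (step3 (f ρ) j)
    rwa [neg_sub] at h3
  by_cases hij : i = j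
  · rw [if_pos hij]
    have hfd : f = fun ρ t => M t (ρ t) := by
      funext ρ t
      simp only [hf]
      by_cases h : t = j
      · rw [if_pos h, h, hij]
      · rw [if_neg h]
    have hS : M.sdet - B ∈ K S := by
      have hB' : B = ∑ u : Fin n, ∑ ρ : Equiv.Perm (Fin n), (Equiv.Perm.sign ρ : ℤ) •
          ∑ σ ∈ Finset.univ.filter (fun σ : Equiv.Perm (Fin n) => σ 0 = u), P (f ρ) σ := by
        rw [hB, Finset.sum_comm]
        refine Finset.sum_congr rfl fun ρ _ => ?_
        rw [← Finset.smul_sum,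
          Finset.sum_fiberwise Finset.univ (fun σ : Equiv.Perm (Fin n) => σ 0) (P (f ρ))]
      rw [hB', sdet_eq]
      apply sum_sub_mem
      intro u _
      apply sum_sub_mem
      intro ρ _
      rw [← smul_sub]
      apply AddSubgroup.zsmul_mem
      rw [← step2 u (f ρ)]
      apply sum_sub_mem
      intro τ hτ
      simp only [Finset.mem_filter, Finset.mem_univ, true_and] at hτ
      have heq : ((baseList n u).map (fun k => f ρ (τ k))).prod
          = M u (ρ u) * (((List.finRange n).filter (fun k => k ≠ u)).map
              (fun k => M (τ k) (ρ (τ k)))).prod := by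
        simp only [hfd]
        rw [baseList, List.map_cons, List.prod_cons, hτ]
      rw [heq]
      exact comm_mem _ _
    have := (K S).sub_mem hKB hS
    have he : n • ((M * M.preadjoint) i j) - B - (M.sdet - B)
        = n • ((M * M.preadjoint) i j) - M.sdet := by abel
    rwa [he] at this
  · rw [if_neg hij, sub_zero]
    have hfs : ∀ ρ t, f (ρ * Equiv.swap i j) t = f ρ (Equiv.swap i j t) := by
      intro ρ t
      simp only [hf]
      by_cases h1 : t = j
      · subst h1
        rw [if_pos rfl, Equiv.Perm.mul_apply, Equiv.swap_apply_right]
        simp [hij]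
      · by_cases h2 : t = i
        · subst h2
          rw [if_neg h1, Equiv.Perm.mul_apply, Equiv.swap_apply_left]
          simp
        · rw [if_neg h1, Equiv.Perm.mul_apply,
            Equiv.swap_apply_of_ne_of_ne h2 h1]
          rw [if_neg h1]
    have hB0 : B = 0 := by
      rw [hB]
      apply Finset.sum_involution (g := fun ρ _ => ρ * Equiv.swap i j)
      · intro ρ _
        have hsign : (Equiv.Perm.sign (ρ * Equiv.swap i j) : ℤ) = - (Equiv.Perm.sign ρ : ℤ) := by
          rw [Equiv.Perm.sign_mul, Equiv.Perm.sign_swap hij]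
          simp
        have hsum : (∑ σ : Equiv.Perm (Fin n), P (f (ρ * Equiv.swap i j)) σ)
            = ∑ σ : Equiv.Perm (Fin n), P (f ρ) σ := by
          calc (∑ σ : Equiv.Perm (Fin n), P (f (ρ * Equiv.swap i j)) σ)
              = ∑ σ : Equiv.Perm (Fin n), P (f ρ) (Equiv.swap i j * σ) := by
                refine Finset.sum_congr rfl fun σ _ => ?_
                rw [P, P]
                refine congrArg _ (List.map_congr_left fun k _ => ?_)
                rw [hfs]
                rfl
            _ = ∑ σ : Equiv.Perm (Fin n), P (f ρ) σ :=
                Fintype.sum_equiv (Equiv.mulLeft (Equiv.swap i j)) _ _ (fun σ => rfl)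
        rw [hsign, hsum, neg_smul]
        exact add_neg_cancel _
      · intro ρ _ _
        intro hcon
        have h1 : Equiv.swap i j = 1 := mul_left_cancel (a := ρ) (by rw [hcon, mul_one])
        have h2 : Equiv.swap i j i = (1 : Equiv.Perm (Fin n)) i := by rw [h1]
        rw [Equiv.swap_apply_left, Equiv.Perm.one_apply] at h2
        exact hij h2.symm
      · intro ρ _; exact Finset.mem_univ _
      · intro ρ _; rw [mul_assoc, Equiv.swap_mul_self, mul_one]
    rw [hB0, sub_zero] at hKB
    exact hKB

end Main2
end CommProof

namespace CommProof
open Polynomial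

lemma coeff_mem {R : Type*} [Ring R] {p : R[X]} (hp : p ∈ K R[X]) (k : ℕ) :
    p.coeff k ∈ K R := by
  induction hp using AddSubgroup.closure_induction with
  | mem z hz =>
      obtain ⟨a, b, rfl⟩ := hz
      rw [Polynomial.coeff_sub, Polynomial.coeff_mul, Polynomial.coeff_mul]
      have hsw := Finset.Nat.sum_antidiagonal_swap (n := k)
        (f := fun x : ℕ × ℕ => b.coeff x.1 * a.coeff x.2)
      simp only [Prod.fst_swap, Prod.snd_swap] at hsw
      rw [← hsw]
      exact sum_sub_mem _ _ _ (fun x _ => comm_mem _ _)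
  | zero => simpa using (K R).zero_mem
  | add a b _ _ ha hb => simpa [Polynomial.coeff_add] using (K R).add_mem ha hb
  | neg a _ ha => simpa using (K R).neg_mem ha

end CommProof


open Polynomial in
/-- Theorem 2.2 (first part): write
`n·(xI - A)(xI - A)* = p(x)·I + C₀ + C₁x + ⋯ + Cₙxⁿ`,
where `p(x)` is the symmetric characteristic polynomial of `A`; then each entry of each
coefficient matrix `C_k` (`0 ≤ k ≤ n`) lies in the additive subgroup `[R,R]` of `R`
generated by all commutators `rs - sr`. -/
theorem coeff_charMat_mul_preadjoint_mem_commutatorSubgroup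
    {n : ℕ} {R : Type*} [Ring R] (A : Matrix (Fin n) (Fin n) R)
    (C : ℕ → Matrix (Fin n) (Fin n) R)
    (hC : ∀ k, ∀ i j : Fin n,
      C k i j = ((n • (A.charMat * A.charMat.preadjoint)
        - A.sCharPoly • (1 : Matrix (Fin n) (Fin n) R[X])) i j).coeff k) :
    ∀ k ≤ n, ∀ i j : Fin n,
      C k i j ∈ AddSubgroup.closure {z : R | ∃ r s : R, z = r * s - s * r} := by
  intro k _ i j
  rw [hC k i j]
  have hmem : ((n • (A.charMat * A.charMat.preadjoint)
      - A.sCharPoly • (1 : Matrix (Fin n) (Fin n) R[X])) i j) ∈ CommProof.K R[X] := by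
    have h := CommProof.main A.charMat i j
    have hentry : (n • (A.charMat * A.charMat.preadjoint)
        - A.sCharPoly • (1 : Matrix (Fin n) (Fin n) R[X])) i j
        = n • ((A.charMat * A.charMat.preadjoint) i j)
          - (if i = j then (A.charMat).sdet else 0) := by
      rw [Matrix.sub_apply, Matrix.smul_apply, Matrix.smul_apply, Matrix.one_apply,
        Matrix.sCharPoly]
      congr 1
      split <;> simp [smul_eq_mul]
    rw [hentry]
    exact h
  exact CommProof.coeff_mem hmem k
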